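/- For every integer ℓ ≥ 2, the ℓ-layer neural tangent kernel function κ_NTK^ℓ satisfies, as t → 0⁺, κ_NTK^ℓ(1−t) = ℓ − (ℓ(ℓ−1)/2) · (√2/π) · t^{1/2} + o(t^{1/2}). -/

import Mathlib

open Filter Asymptotics Real Set Topology

/-- The degree-0 arc-cosine function `κ₀(u) = 1 - arccos(u)/π`. -/
noncomputable def kappa0 (u : ℝ) : ℝ := 1 - Real.arccos u / Real.pi

/-- The degree-1 arc-cosine function `κ₁(u) = (√(1-u²) + u(π - arccos u))/π`. -/
noncomputable def kappa1 (u : ℝ) : ℝ :=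
  (Real.sqrt (1 - u ^ 2) + u * (Real.pi - Real.arccos u)) / Real.pi

/-- The `ℓ`-layer neural tangent kernel function of a fully-connected ReLU network
(defined for `ℓ ≥ 2`; values below 2 are set to the 2-layer NTK):
`κ_NTK^2(u) = u κ₀(u) + κ₁(u)` and
`κ_NTK^ℓ(u) = κ_NTK^{ℓ-1}(u) · κ₀(κ₁^{∘(ℓ-2)}(u)) + κ₁^{∘(ℓ-1)}(u)` for `ℓ ≥ 3`. -/
noncomputable def kappaNTK : ℕ → ℝ → ℝ
  | 0, u => u * kappa0 u + kappa1 u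
  | 1, u => u * kappa0 u + kappa1 u
  | 2, u => u * kappa0 u + kappa1 u
  | n + 3, u => kappaNTK (n + 2) u * kappa0 (kappa1^[n + 1] u) + kappa1^[n + 2] u

private lemma sqrt_two_le : Real.sqrt 2 ≤ 3/2 := by
  nlinarith [Real.sq_sqrt (by norm_num : (0:ℝ) ≤ 2), Real.sqrt_nonneg 2]

private lemma arccos_expand {t : ℝ} (ht : t ∈ Set.Ioc (0:ℝ) 1) :
    |Real.arccos (1 - t) - Real.sqrt 2 * Real.sqrt t| ≤ t * Real.sqrt t := by
  obtain ⟨ht0, ht1⟩ := ht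
  set θ := Real.arccos (1 - t) with hθdef
  have hπ := Real.pi_gt_three
  have hθ0 : 0 < θ := Real.arccos_pos.2 (by linarith)
  have hθπ : θ ≤ Real.pi := Real.arccos_le_pi _
  have hcos : Real.cos θ = 1 - t := Real.cos_arccos (by linarith) (by linarith)
  have hsin : Real.sin (θ/2) = Real.sqrt (t/2) := by
    rw [Real.sin_half_eq_sqrt hθ0.le (by linarith), hcos]
    norm_num
  have h2t : Real.sqrt 2 * Real.sqrt t = 2 * Real.sqrt (t/2) := by
    rw [← Real.sqrt_mul (by norm_num : (0:ℝ) ≤ 2) t,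
        show (2:ℝ)*t = 2^2 * (t/2) by ring,
        Real.sqrt_mul (by positivity) (t/2), Real.sqrt_sq (by norm_num)]
  have hs0 : 0 ≤ Real.sqrt (t/2) := Real.sqrt_nonneg _
  have hst : Real.sqrt (t/2) ≤ Real.sqrt t := Real.sqrt_le_sqrt (by linarith)
  have hssq : Real.sqrt (t/2) ^ 2 = t/2 := Real.sq_sqrt (by linarith)
  have hhalf : θ/2 < 1 := by
    by_contra h
    push_neg at h
    have h1 : Real.sin 1 ≤ Real.sin (θ/2) := by
      rcases eq_or_lt_of_le h with h' | h'
      · rw [← h']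
      · exact le_of_lt (Real.strictMonoOn_sin (Set.mem_Icc.2 ⟨by linarith, by linarith⟩)
          (Set.mem_Icc.2 ⟨by linarith, by linarith⟩) h')
    have h2 : (3:ℝ)/4 < Real.sin 1 := by
      have := Real.sin_gt_sub_cube (by norm_num : (0:ℝ) < 1)
      norm_num at this
      linarith
    have h3 : Real.sqrt (t/2) ≤ 3/4 := by
      rw [show (3:ℝ)/4 = Real.sqrt ((3/4)^2) from (Real.sqrt_sq (by norm_num)).symm]
      exact Real.sqrt_le_sqrt (by nlinarith)
    rw [hsin] at h1
    linarith
  have hx0 : 0 < θ/2 := by positivity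
  have hsin_lt : Real.sin (θ/2) < θ/2 := Real.sin_lt hx0
  have hcube : θ/2 - (θ/2)^3/4 < Real.sin (θ/2) := by
    have := Real.sin_gt_sub_cube hx0
    nlinarith [pow_pos hx0 3]
  have hxle : θ/2 ≤ (4/3) * Real.sqrt (t/2) := by
    rw [hsin] at hcube
    nlinarith [hx0, hhalf, mul_pos hx0 (mul_pos hx0 (sub_pos.2 hhalf))]
  have hx3 : (θ/2)^3 ≤ ((4/3) * Real.sqrt (t/2))^3 := pow_le_pow_left₀ hx0.le hxle 3
  have hs3 : Real.sqrt (t/2)^3 = (t/2) * Real.sqrt (t/2) := by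
    rw [pow_succ, hssq]
  have hexp : ((4:ℝ)/3 * Real.sqrt (t/2))^3 = 64/27 * ((t/2) * Real.sqrt (t/2)) := by
    rw [mul_pow, hs3]; ring
  have hts : (t/2) * Real.sqrt (t/2) ≤ (t/2) * Real.sqrt t :=
    mul_le_mul_of_nonneg_left hst (by linarith)
  have htpos : 0 ≤ t * Real.sqrt t := by positivity
  rw [hsin] at hsin_lt hcube
  rw [h2t, abs_le]
  constructor
  · nlinarith [hsin_lt]
  · nlinarith [hcube, hx3, hexp, hts, htpos]

private lemma kappa1_expand {t : ℝ} (ht : t ∈ Set.Ioc (0:ℝ) 1) :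
    |kappa1 (1 - t) - (1 - t)| ≤ t * Real.sqrt t := by
  obtain ⟨ht0, ht1⟩ := ht
  have hπ := Real.pi_gt_three
  have hπ0 : (0:ℝ) < Real.pi := Real.pi_pos
  have hθ := arccos_expand ⟨ht0, ht1⟩
  set θ := Real.arccos (1 - t) with hθdef
  set w := Real.sqrt (1 - t/2) with hwdef
  have hA : Real.sqrt (1 - (1-t)^2) = Real.sqrt 2 * Real.sqrt t * w := by
    rw [hwdef, show (1:ℝ) - (1-t)^2 = 2 * t * (1 - t/2) by ring,
        Real.sqrt_mul (by positivity) (1 - t/2), Real.sqrt_mul (by norm_num : (0:ℝ) ≤ 2) t]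
  have hwu : w ≤ 1 := by
    have h := Real.sqrt_le_sqrt (show 1 - t/2 ≤ 1 by linarith)
    rwa [Real.sqrt_one] at h
  have hwl : 1 - t ≤ w := by
    rw [hwdef]
    rw [Real.le_sqrt (by linarith) (by linarith)]
    nlinarith
  have hst0 : 0 ≤ Real.sqrt t := Real.sqrt_nonneg t
  have hst1 : Real.sqrt t ≤ 1 := by
    have h := Real.sqrt_le_sqrt ht1
    rwa [Real.sqrt_one] at h
  have heq : kappa1 (1 - t) - (1 - t)
      = (Real.sqrt (1 - (1-t)^2) - (1-t) * θ) / Real.pi := by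
    unfold kappa1
    field_simp
    ring
  rw [heq, hA, abs_div, abs_of_pos hπ0, div_le_iff₀ hπ0]
  have hr := abs_le.1 hθ
  have key : |Real.sqrt 2 * Real.sqrt t * w - (1-t) * θ| ≤ 3 * (t * Real.sqrt t) := by
    have hid : Real.sqrt 2 * Real.sqrt t * w - (1-t) * θ
        = Real.sqrt 2 * Real.sqrt t * (w - (1-t)) - (1-t) * (θ - Real.sqrt 2 * Real.sqrt t) := by
      ring
    rw [hid, abs_le]
    have hp : 0 ≤ Real.sqrt 2 * Real.sqrt t := by positivity
    have h1 : Real.sqrt 2 * Real.sqrt t * (w - (1-t)) ≤ 2 * (t * Real.sqrt t) := by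
      nlinarith [mul_le_mul_of_nonneg_left (show w - (1-t) ≤ t by linarith) hp, sqrt_two_le,
        mul_nonneg ht0.le hst0]
    have h1' : 0 ≤ Real.sqrt 2 * Real.sqrt t * (w - (1-t)) := by
      have := sub_nonneg.2 (le_trans (by linarith : (1:ℝ) - t ≤ 1 - t) hwl)
      positivity
    have h2 : |(1-t) * (θ - Real.sqrt 2 * Real.sqrt t)| ≤ t * Real.sqrt t := by
      rw [abs_mul, abs_of_nonneg (by linarith : (0:ℝ) ≤ 1 - t)]
      calc (1-t) * |θ - Real.sqrt 2 * Real.sqrt t| ≤ 1 * (t * Real.sqrt t) := by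
            apply mul_le_mul (by linarith) hθ (abs_nonneg _) (by norm_num)
        _ = t * Real.sqrt t := one_mul _
    have h2' := abs_le.1 h2
    constructor
    · nlinarith [h2'.1, h1']
    · nlinarith [h2'.2, h1]
  calc |Real.sqrt 2 * Real.sqrt t * w - (1-t) * θ| ≤ 3 * (t * Real.sqrt t) := key
    _ ≤ t * Real.sqrt t * Real.pi := by nlinarith [mul_nonneg ht0.le hst0]

set_option maxHeartbeats 1000000 in
private lemma iter_expand (m : ℕ) : ∃ δ : ℝ, 0 < δ ∧ δ ≤ 1 ∧ ∀ t ∈ Set.Ioo (0:ℝ) δ,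
    (1 - kappa1^[m] (1 - t)) ∈ Set.Ioc (0:ℝ) 1 ∧
    |kappa1^[m] (1 - t) - (1 - t)| ≤ 3 * m * (t * Real.sqrt t) := by
  induction m with
  | zero =>
    refine ⟨1, one_pos, le_refl 1, fun t ht => ?_⟩
    simp only [Function.iterate_zero_apply]
    constructor
    · constructor <;> [linarith [ht.1, ht.2]; linarith [ht.2]]
    · simp
  | succ m ih =>
    obtain ⟨δ, hδ0, hδ1, H⟩ := ih
    have hm0 : (0:ℝ) ≤ (m:ℝ) := Nat.cast_nonneg m
    have hm4 : (0:ℝ) < 3*m+4 := by positivity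
    have hεle : ((1:ℝ)/(3*m+4))^2 ≤ 1/16 := by
      rw [div_pow, one_pow]
      rw [div_le_div_iff₀ (by positivity) (by norm_num)]
      nlinarith
    refine ⟨min δ ((1/(3*m+4))^2), lt_min hδ0 (by positivity),
      le_trans (min_le_right _ _) (by nlinarith), fun t ht => ?_⟩
    obtain ⟨ht0, htδ⟩ := ht
    have ht1 : t < (1/(3*m+4))^2 := lt_of_lt_of_le htδ (min_le_right _ _)
    have ht16 : t < 1/16 := lt_of_lt_of_le ht1 hεle
    have htle1 : t ≤ 1 := by linarith
    have hst0 : 0 ≤ Real.sqrt t := Real.sqrt_nonneg t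
    have hsq : Real.sqrt t * Real.sqrt t = t := Real.mul_self_sqrt ht0.le
    have hstb : Real.sqrt t ≤ 1/(3*m+4) := by
      have h := Real.sqrt_le_sqrt ht1.le
      rwa [Real.sqrt_sq (by positivity)] at h
    -- bound t * √t ≤ t / (3m+4)
    have htst : t * Real.sqrt t ≤ t * (1/(3*m+4)) := mul_le_mul_of_nonneg_left hstb ht0.le
    obtain ⟨hsIoc, herr⟩ := H t ⟨ht0, lt_of_lt_of_le htδ (min_le_left _ _)⟩
    set s := 1 - kappa1^[m] (1 - t) with hsdef
    have hks : kappa1^[m] (1 - t) = 1 - s := by rw [hsdef]; ring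
    clear_value s
    have herr' : |t - s| ≤ 3 * m * (t * Real.sqrt t) := by
      rw [show t - s = kappa1^[m] (1 - t) - (1 - t) by rw [hks]; ring]
      exact herr
    have habs := abs_le.1 herr'
    have h3m : 3 * (m:ℝ) * (t * Real.sqrt t) ≤ t := by
      calc 3 * (m:ℝ) * (t * Real.sqrt t) ≤ 3 * (m:ℝ) * (t * (1/(3*m+4))) := by
            apply mul_le_mul_of_nonneg_left htst (by positivity)
        _ ≤ t := by rw [mul_comm t, ← mul_assoc, mul_one_div, div_mul_eq_mul_div]
                    rw [div_le_iff₀ hm4]; nlinarith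
    have hs2t : s ≤ 2 * t := by linarith [habs.1]
    have hs0 : 0 < s := hsIoc.1
    have hnext : kappa1^[m+1] (1 - t) = kappa1 (1 - s) := by
      rw [Function.iterate_succ_apply', hks]
    have hk1 := kappa1_expand ⟨hs0, hsIoc.2⟩
    -- s * √s ≤ 3 t √t
    have hss : s * Real.sqrt s ≤ 3 * (t * Real.sqrt t) := by
      have h1 : Real.sqrt s ≤ Real.sqrt 2 * Real.sqrt t := by
        rw [← Real.sqrt_mul (by norm_num : (0:ℝ) ≤ 2)]
        exact Real.sqrt_le_sqrt hs2t
      calc s * Real.sqrt s ≤ (2*t) * (Real.sqrt 2 * Real.sqrt t) := by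
            apply mul_le_mul hs2t h1 (Real.sqrt_nonneg s) (by linarith)
        _ ≤ 3 * (t * Real.sqrt t) := by nlinarith [sqrt_two_le, mul_nonneg ht0.le hst0]
    have hbound : |kappa1^[m+1] (1 - t) - (1 - t)| ≤ 3 * (m+1 : ℕ) * (t * Real.sqrt t) := by
      rw [hnext]
      have : kappa1 (1 - s) - (1 - t) = (kappa1 (1 - s) - (1 - s)) + (t - s) := by ring
      rw [this]
      calc |(kappa1 (1 - s) - (1 - s)) + (t - s)|
          ≤ |kappa1 (1 - s) - (1 - s)| + |t - s| := abs_add_le _ _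
        _ ≤ s * Real.sqrt s + 3 * m * (t * Real.sqrt t) := add_le_add hk1 herr'
        _ ≤ 3 * (t * Real.sqrt t) + 3 * m * (t * Real.sqrt t) := by linarith [hss]
        _ = 3 * (m+1 : ℕ) * (t * Real.sqrt t) := by push_cast; ring
    refine ⟨?_, hbound⟩
    -- membership for m+1
    have habs2 := abs_le.1 hbound
    have h3m1 : 3 * ((m:ℝ)+1) * (t * Real.sqrt t) < t := by
      calc 3 * ((m:ℝ)+1) * (t * Real.sqrt t) ≤ 3 * ((m:ℝ)+1) * (t * (1/(3*m+4))) := by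
            apply mul_le_mul_of_nonneg_left htst (by positivity)
        _ < t := by rw [mul_comm t, ← mul_assoc, mul_one_div, div_mul_eq_mul_div]
                    rw [div_lt_iff₀ hm4]; nlinarith
    push_cast at habs2
    set u := kappa1^[m+1] (1 - t) with hudef
    clear_value u
    constructor
    · nlinarith [habs2.2, h3m1]
    · nlinarith [habs2.1, h3m1]

set_option maxHeartbeats 1000000 in
private lemma kappa0_iter (m : ℕ) : ∃ δ : ℝ, 0 < δ ∧ δ ≤ 1 ∧ ∀ t ∈ Set.Ioo (0:ℝ) δ,
    |kappa0 (kappa1^[m] (1 - t)) - (1 - Real.sqrt 2 / Real.pi * Real.sqrt t)|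
      ≤ (2 * m + 2) * t := by
  obtain ⟨δ, hδ0, hδ1, H⟩ := iter_expand m
  have hm0 : (0:ℝ) ≤ (m:ℝ) := Nat.cast_nonneg m
  have hm4 : (0:ℝ) < 3*m+4 := by positivity
  refine ⟨min δ ((1/(3*m+4))^2), lt_min hδ0 (by positivity),
    le_trans (min_le_right _ _) (by rw [div_pow, one_pow, div_le_one (by positivity)]; nlinarith),
    fun t ht => ?_⟩
  obtain ⟨ht0, htδ⟩ := ht
  have ht1 : t < (1/(3*m+4))^2 := lt_of_lt_of_le htδ (min_le_right _ _)
  have hεle : ((1:ℝ)/(3*m+4))^2 ≤ 1/16 := by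
    rw [div_pow, one_pow, div_le_div_iff₀ (by positivity) (by norm_num)]
    nlinarith
  have htle1 : t ≤ 1 := by linarith
  have hst0 : 0 ≤ Real.sqrt t := Real.sqrt_nonneg t
  have hsq : Real.sqrt t * Real.sqrt t = t := Real.mul_self_sqrt ht0.le
  have hst1 : Real.sqrt t ≤ 1 := by
    have h := Real.sqrt_le_sqrt htle1
    rwa [Real.sqrt_one] at h
  have hstb : Real.sqrt t ≤ 1/(3*m+4) := by
    have h := Real.sqrt_le_sqrt ht1.le
    rwa [Real.sqrt_sq (by positivity)] at h
  have htst : t * Real.sqrt t ≤ t * (1/(3*m+4)) := mul_le_mul_of_nonneg_left hstb ht0.le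
  obtain ⟨hsIoc, herr⟩ := H t ⟨ht0, lt_of_lt_of_le htδ (min_le_left _ _)⟩
  set s := 1 - kappa1^[m] (1 - t) with hsdef
  have hks : kappa1^[m] (1 - t) = 1 - s := by rw [hsdef]; ring
  clear_value s
  have hs0 : 0 < s := hsIoc.1
  have hs1 : s ≤ 1 := hsIoc.2
  have herr' : |t - s| ≤ 3 * m * (t * Real.sqrt t) := by
    rw [show t - s = kappa1^[m] (1 - t) - (1 - t) by rw [hks]; ring]
    exact herr
  have habs := abs_le.1 herr'
  have h3m : 3 * (m:ℝ) * (t * Real.sqrt t) ≤ t := by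
    calc 3 * (m:ℝ) * (t * Real.sqrt t) ≤ 3 * (m:ℝ) * (t * (1/(3*m+4))) :=
          mul_le_mul_of_nonneg_left htst (by positivity)
      _ ≤ t := by rw [mul_comm t, ← mul_assoc, mul_one_div, div_mul_eq_mul_div]
                  rw [div_le_iff₀ hm4]; nlinarith
  have hs2t : s ≤ 2 * t := by linarith [habs.1]
  -- arccos bound at s
  have hacs := arccos_expand ⟨hs0, hs1⟩
  have hss0 : 0 ≤ Real.sqrt s := Real.sqrt_nonneg s
  have hssq : Real.sqrt s * Real.sqrt s = s := Real.mul_self_sqrt hs0.le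
  have hss : s * Real.sqrt s ≤ 3 * t := by
    have h1 : Real.sqrt s ≤ Real.sqrt 2 * Real.sqrt t := by
      rw [← Real.sqrt_mul (by norm_num : (0:ℝ) ≤ 2)]
      exact Real.sqrt_le_sqrt hs2t
    calc s * Real.sqrt s ≤ (2*t) * (Real.sqrt 2 * Real.sqrt t) :=
          mul_le_mul hs2t h1 hss0 (by linarith)
      _ ≤ 3 * (t * Real.sqrt t) := by nlinarith [sqrt_two_le, mul_nonneg ht0.le hst0]
      _ ≤ 3 * t := by nlinarith [mul_le_mul_of_nonneg_left hst1 ht0.le]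
  -- |√s - √t| ≤ 3 m t
  have hpos : 0 < Real.sqrt s + Real.sqrt t := by positivity
  have hprod : (Real.sqrt s - Real.sqrt t) * (Real.sqrt s + Real.sqrt t) = s - t := by
    nlinarith [hssq, hsq]
  have hdiff : |Real.sqrt s - Real.sqrt t| ≤ 3 * m * t := by
    have habs' : |Real.sqrt s - Real.sqrt t| * (Real.sqrt s + Real.sqrt t) = |s - t| := by
      rw [← abs_of_pos hpos, ← abs_mul, hprod]
    have hb : |Real.sqrt s - Real.sqrt t| * (Real.sqrt s + Real.sqrt t)
        ≤ (3 * m * t) * (Real.sqrt s + Real.sqrt t) := by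
      rw [habs', abs_sub_comm]
      calc |t - s| ≤ 3 * m * (t * Real.sqrt t) := herr'
        _ ≤ (3 * m * t) * (Real.sqrt s + Real.sqrt t) := by
            nlinarith [mul_nonneg (mul_nonneg hm0 ht0.le) hss0]
    exact le_of_mul_le_mul_right hb hpos
  have hdiff' := abs_le.1 hdiff
  have hacs' := abs_le.1 hacs
  -- combine
  have hπ := Real.pi_gt_three
  have hπ0 : (0:ℝ) < Real.pi := Real.pi_pos
  have hkey : |Real.arccos (1 - s) - Real.sqrt 2 * Real.sqrt t| ≤ (6 * m + 3) * t := by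
    have hid : Real.arccos (1 - s) - Real.sqrt 2 * Real.sqrt t
        = (Real.arccos (1 - s) - Real.sqrt 2 * Real.sqrt s)
          + Real.sqrt 2 * (Real.sqrt s - Real.sqrt t) := by ring
    rw [hid]
    calc |(Real.arccos (1 - s) - Real.sqrt 2 * Real.sqrt s)
          + Real.sqrt 2 * (Real.sqrt s - Real.sqrt t)|
        ≤ |Real.arccos (1 - s) - Real.sqrt 2 * Real.sqrt s|
          + |Real.sqrt 2 * (Real.sqrt s - Real.sqrt t)| := abs_add_le _ _
      _ ≤ s * Real.sqrt s + Real.sqrt 2 * |Real.sqrt s - Real.sqrt t| := by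
          rw [abs_mul, abs_of_nonneg (Real.sqrt_nonneg 2)]
          exact add_le_add hacs le_rfl
      _ ≤ 3 * t + (3/2) * (3 * m * t) := by
          apply add_le_add hss
          apply mul_le_mul sqrt_two_le hdiff (abs_nonneg _) (by norm_num)
      _ ≤ (6 * m + 3) * t := by nlinarith [mul_nonneg hm0 ht0.le]
  have heq : kappa0 (kappa1^[m] (1 - t)) - (1 - Real.sqrt 2 / Real.pi * Real.sqrt t)
      = (Real.sqrt 2 * Real.sqrt t - Real.arccos (1 - s)) / Real.pi := by
    rw [hks]
    unfold kappa0
    field_simp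
    ring
  rw [heq, abs_div, abs_of_pos hπ0, div_le_iff₀ hπ0, abs_sub_comm]
  calc |Real.arccos (1 - s) - Real.sqrt 2 * Real.sqrt t| ≤ (6 * m + 3) * t := hkey
    _ ≤ (2 * m + 2) * t * Real.pi := by nlinarith [mul_nonneg hm0 ht0.le, ht0.le]

private lemma kappa0_mem (u : ℝ) : 0 ≤ kappa0 u ∧ kappa0 u ≤ 1 := by
  have h1 := Real.arccos_nonneg u
  have h2 := Real.arccos_le_pi u
  have hπ0 : (0:ℝ) < Real.pi := Real.pi_pos
  unfold kappa0
  constructor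
  · have : Real.arccos u / Real.pi ≤ 1 := by rw [div_le_one hπ0]; exact h2
    linarith
  · have : 0 ≤ Real.arccos u / Real.pi := div_nonneg h1 hπ0.le
    linarith

private lemma sqrt_div_pi_le_one : Real.sqrt 2 / Real.pi ≤ 1 := by
  have hπ := Real.pi_gt_three
  rw [div_le_one Real.pi_pos]
  linarith [sqrt_two_le]

set_option maxHeartbeats 2000000 in
private lemma ntk_bound (ℓ : ℕ) (hℓ : 2 ≤ ℓ) : ∃ C δ : ℝ, 0 < δ ∧ δ ≤ 1 ∧
    ∀ t ∈ Set.Ioo (0:ℝ) δ,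
    |kappaNTK ℓ (1 - t) - ((ℓ : ℝ) - (ℓ : ℝ) * ((ℓ : ℝ) - 1) / 2 * (Real.sqrt 2 / Real.pi)
        * Real.sqrt t)| ≤ C * t := by
  induction ℓ, hℓ using Nat.le_induction with
  | base =>
    obtain ⟨δ₀, hδ₀0, hδ₀1, H₀⟩ := kappa0_iter 0
    refine ⟨6, δ₀, hδ₀0, hδ₀1, fun t ht => ?_⟩
    obtain ⟨ht0, htδ⟩ := ht
    have htle1 : t ≤ 1 := le_trans htδ.le hδ₀1
    have hst0 : 0 ≤ Real.sqrt t := Real.sqrt_nonneg t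
    have hst1 : Real.sqrt t ≤ 1 := by
      have h := Real.sqrt_le_sqrt htle1
      rwa [Real.sqrt_one] at h
    have ha0 : 0 ≤ Real.sqrt 2 / Real.pi := by positivity
    have ha1 := sqrt_div_pi_le_one
    have h₀ := H₀ t ⟨ht0, htδ⟩
    simp only [Function.iterate_zero_apply] at h₀
    norm_num at h₀
    have h₁ := kappa1_expand ⟨ht0, htle1⟩
    have e₀ := abs_le.1 h₀
    have e₁ := abs_le.1 h₁
    have hid : kappaNTK 2 (1 - t) - (((2:ℕ) : ℝ) - ((2:ℕ) : ℝ) * (((2:ℕ) : ℝ) - 1) / 2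
          * (Real.sqrt 2 / Real.pi) * Real.sqrt t)
        = -2*t + (Real.sqrt 2 / Real.pi) * (t * Real.sqrt t)
          + (1 - t) * (kappa0 (1 - t) - (1 - Real.sqrt 2 / Real.pi * Real.sqrt t))
          + (kappa1 (1 - t) - (1 - t)) := by
      show (1 - t) * kappa0 (1 - t) + kappa1 (1 - t) - _ = _
      push_cast
      ring
    rw [hid, abs_le]
    have htst : t * Real.sqrt t ≤ t := by nlinarith
    constructor
    · nlinarith [e₀.1, e₁.1, mul_nonneg ht0.le hst0]
    · nlinarith [e₀.2, e₁.2, mul_nonneg ht0.le hst0]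
  | succ n hn ih =>
    obtain ⟨k, rfl⟩ : ∃ k, n = k + 2 := ⟨n - 2, by omega⟩
    obtain ⟨C, δ₁, hδ₁0, hδ₁1, H₁⟩ := ih
    obtain ⟨δ₂, hδ₂0, hδ₂1, H₂⟩ := kappa0_iter (k + 1)
    obtain ⟨δ₃, hδ₃0, hδ₃1, H₃⟩ := iter_expand (k + 2)
    set c : ℝ := ((k:ℝ)+2) * ((k:ℝ)+1) / 2 with hc
    have hc0 : 0 ≤ c := by rw [hc]; positivity
    refine ⟨C + (((k:ℝ)+2) + c) * (2*((k:ℝ)+1) + 2) + c + 1 + 3*((k:ℝ)+2),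
      min δ₁ (min δ₂ δ₃), lt_min hδ₁0 (lt_min hδ₂0 hδ₃0),
      le_trans (min_le_left _ _) hδ₁1, fun t ht => ?_⟩
    obtain ⟨ht0, htδ⟩ := ht
    have ht1 : t < δ₁ := lt_of_lt_of_le htδ (min_le_left _ _)
    have ht2 : t < δ₂ := lt_of_lt_of_le htδ (le_trans (min_le_right _ _) (min_le_left _ _))
    have ht3 : t < δ₃ := lt_of_lt_of_le htδ (le_trans (min_le_right _ _) (min_le_right _ _))
    have htle1 : t ≤ 1 := le_trans ht1.le hδ₁1
    have hst0 : 0 ≤ Real.sqrt t := Real.sqrt_nonneg t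
    have hst1 : Real.sqrt t ≤ 1 := by
      have h := Real.sqrt_le_sqrt htle1
      rwa [Real.sqrt_one] at h
    have hsq : Real.sqrt t * Real.sqrt t = t := Real.mul_self_sqrt ht0.le
    have ha0 : 0 ≤ Real.sqrt 2 / Real.pi := by positivity
    have ha1 := sqrt_div_pi_le_one
    set a : ℝ := Real.sqrt 2 / Real.pi with hadef
    set D : ℝ := kappaNTK (k + 2) (1 - t) with hD
    set K : ℝ := kappa0 (kappa1^[k + 1] (1 - t)) with hK
    set I : ℝ := kappa1^[k + 2] (1 - t) with hI
    have hDL : |D - (((k:ℝ)+2) - c * a * Real.sqrt t)| ≤ C * t := by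
      have h := H₁ t ⟨ht0, ht1⟩
      have heq : ((k:ℝ)+2) - c * a * Real.sqrt t
          = (((k+2:ℕ)):ℝ) - (((k+2:ℕ)):ℝ) * ((((k+2:ℕ)):ℝ) - 1) / 2 * a * Real.sqrt t := by
        rw [hc]; push_cast; ring
      rw [heq]
      exact h
    have hKb : |K - (1 - a * Real.sqrt t)| ≤ (2*((k:ℝ)+1) + 2) * t := by
      have h := H₂ t ⟨ht0, ht2⟩
      have heq : ((2*((k+1:ℕ)):ℝ) + 2) * t = (2*((k:ℝ)+1) + 2) * t := by push_cast; ring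
      rw [← heq]
      exact h
    have hIb' : |I - (1 - t)| ≤ 3*((k:ℝ)+2) * t := by
      have h := (H₃ t ⟨ht0, ht3⟩).2
      have heq : 3 * (((k+2:ℕ)):ℝ) * (t * Real.sqrt t) = 3*((k:ℝ)+2) * (t * Real.sqrt t) := by
        push_cast; ring
      rw [heq] at h
      calc |I - (1 - t)| ≤ 3*((k:ℝ)+2) * (t * Real.sqrt t) := h
        _ ≤ 3*((k:ℝ)+2) * t := by
            apply mul_le_mul_of_nonneg_left _ (by positivity)
            nlinarith
    have hKmem := kappa0_mem (kappa1^[k + 1] (1 - t))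
    rw [← hK] at hKmem
    have hKabs : |K| ≤ 1 := abs_le.2 ⟨by linarith [hKmem.1], hKmem.2⟩
    have hLabs : |(((k:ℝ)+2) - c * a * Real.sqrt t)| ≤ ((k:ℝ)+2) + c := by
      rw [abs_le]
      have hca : 0 ≤ c * a * Real.sqrt t := by positivity
      have hat : a * Real.sqrt t ≤ 1 := by nlinarith [mul_le_mul ha1 hst1 hst0 zero_le_one]
      have hca1 : c * a * Real.sqrt t ≤ c := by nlinarith [mul_le_mul_of_nonneg_left hat hc0]
      constructor
      · have : (0:ℝ) ≤ (k:ℝ) := Nat.cast_nonneg k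
        nlinarith
      · nlinarith
    have hCt0 : 0 ≤ C * t := le_trans (abs_nonneg _) hDL
    have hred : kappaNTK (k + 2 + 1) (1 - t) = D * K + I := rfl
    rw [hred]
    have hgoal_eq : D * K + I - ((((k+2+1:ℕ)):ℝ) - (((k+2+1:ℕ)):ℝ) * ((((k+2+1:ℕ)):ℝ) - 1) / 2
          * a * Real.sqrt t)
        = (D - (((k:ℝ)+2) - c * a * Real.sqrt t)) * K
          + (((k:ℝ)+2) - c * a * Real.sqrt t) * (K - (1 - a * Real.sqrt t))
          + (c * (a * a) * (Real.sqrt t * Real.sqrt t) - t + (I - (1 - t))) := by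
      rw [hc]
      push_cast
      ring
    rw [hgoal_eq]
    set A : ℝ := (D - (((k:ℝ)+2) - c * a * Real.sqrt t)) * K with hA
    set B : ℝ := (((k:ℝ)+2) - c * a * Real.sqrt t) * (K - (1 - a * Real.sqrt t)) with hB
    set F : ℝ := I - (1 - t) with hF
    have htri : |A + B + (c * (a * a) * (Real.sqrt t * Real.sqrt t) - t + F)|
        ≤ |A| + |B| + (c * (a * a) * t + t + |F|) := by
      rw [hsq]
      calc |A + B + (c * (a * a) * t - t + F)|
          ≤ |A + B| + |c * (a * a) * t - t + F| := abs_add_le _ _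
        _ ≤ (|A| + |B|) + (|c * (a * a) * t - t| + |F|) :=
            add_le_add (abs_add_le _ _) (abs_add_le _ _)
        _ ≤ (|A| + |B|) + ((|c * (a * a) * t| + |t|) + |F|) := by
            gcongr
            exact abs_sub _ _
        _ = |A| + |B| + (c * (a * a) * t + t + |F|) := by
            rw [abs_of_nonneg (by positivity : 0 ≤ c * (a * a) * t), abs_of_pos ht0]
    have hAb : |A| ≤ C * t := by
      rw [hA, abs_mul]
      calc |D - (((k:ℝ)+2) - c * a * Real.sqrt t)| * |K| ≤ (C * t) * 1 :=
            mul_le_mul hDL hKabs (abs_nonneg _) hCt0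
        _ = C * t := mul_one _
    have hBb : |B| ≤ (((k:ℝ)+2) + c) * ((2*((k:ℝ)+1) + 2) * t) := by
      rw [hB, abs_mul]
      exact mul_le_mul hLabs hKb (abs_nonneg _) (by positivity)
    have hEb : c * (a * a) * t ≤ c * t := by
      nlinarith [mul_le_mul ha1 ha1 ha0 zero_le_one, mul_nonneg hc0 ht0.le]
    calc |A + B + (c * (a * a) * (Real.sqrt t * Real.sqrt t) - t + F)|
        ≤ |A| + |B| + (c * (a * a) * t + t + |F|) := htri
      _ ≤ C * t + (((k:ℝ)+2) + c) * ((2*((k:ℝ)+1) + 2) * t) + (c * t + t + 3*((k:ℝ)+2) * t) := by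
          gcongr
      _ ≤ (C + (((k:ℝ)+2) + c) * (2*((k:ℝ)+1) + 2) + c + 1 + 3*((k:ℝ)+2)) * t := by
          nlinarith [ht0.le]

/-- Expansion around `+1` of the `ℓ`-layer NTK function. -/
theorem deep_ntk_expansion_plus_one (ℓ : ℕ) (hℓ : 2 ≤ ℓ) :
    (fun t : ℝ => kappaNTK ℓ (1 - t) -
        ((ℓ : ℝ) - (ℓ : ℝ) * ((ℓ : ℝ) - 1) / 2 * (Real.sqrt 2 / Real.pi) * t ^ ((1 : ℝ) / 2)))
      =o[𝓝[>] (0 : ℝ)] fun t => t ^ ((1 : ℝ) / 2) := by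
  simp only [← Real.sqrt_eq_rpow]
  obtain ⟨C, δ, hδ0, hδ1, H⟩ := ntk_bound ℓ hℓ
  have hBO : (fun t : ℝ => kappaNTK ℓ (1 - t) -
      ((ℓ : ℝ) - (ℓ : ℝ) * ((ℓ : ℝ) - 1) / 2 * (Real.sqrt 2 / Real.pi) * Real.sqrt t))
      =O[𝓝[>] (0:ℝ)] (fun t => t) := by
    rw [isBigO_iff]
    refine ⟨C, ?_⟩
    filter_upwards [Ioo_mem_nhdsGT hδ0] with t ht
    rw [Real.norm_eq_abs, Real.norm_eq_abs, abs_of_pos ht.1]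
    exact H t ht
  have hlo : (fun t : ℝ => t) =o[𝓝[>] (0:ℝ)] fun t => Real.sqrt t := by
    rw [isLittleO_iff]
    intro ε hε
    filter_upwards [Ioo_mem_nhdsGT (show (0:ℝ) < ε^2 by positivity)] with t ht
    rw [Real.norm_eq_abs, Real.norm_eq_abs, abs_of_pos ht.1,
      abs_of_pos (Real.sqrt_pos.2 ht.1)]
    have h1 : Real.sqrt t ≤ ε := by
      have h := Real.sqrt_le_sqrt ht.2.le
      rwa [Real.sqrt_sq hε.le] at h
    nlinarith [Real.mul_self_sqrt ht.1.le, Real.sqrt_nonneg t]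
  exact hBO.trans_isLittleO hlo
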